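/- Let Q be a quantale with exactly five pairwise distinct elements ⊥, α, γ, β, ⊤ (every element of Q is one of these) such that ⊥ < α < γ < ⊤, ⊥ < β < ⊤, and β is incomparable with both α and γ (the pentagon N5; hence α ⊔ β = γ ⊔ β = ⊤ and γ ⊓ β = ⊥). Assume γ * a ⊔ a * γ ≤ a for all a ∈ Q. Then Q has a two-sided multiplicative unit if and only if γ * γ = γ; and in that case γ is the unit (γ * a = a = a * γ for all a ∈ Q). -/
import Mathlib


/-- Let `Q` be a quantale on the pentagon `N5` (exactly the five
pairwise distinct elements `⊥, α, γ, β, ⊤` with `⊥ < α < γ < ⊤`, `⊥ < β < ⊤`, and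
`β` incomparable with `α` and `γ`) such that `γ * a ⊔ a * γ ≤ a` for all `a`.
Then `Q` has a two-sided unit iff `γ * γ = γ`, in which case `γ` is the unit. -/
theorem stmt_16 {Q : Type*} [CompleteLattice Q] (mul : Q → Q → Q)
    (hassoc : ∀ a b c : Q, mul (mul a b) c = mul a (mul b c))
    (hsSup_left : ∀ (A : Set Q) (b : Q), mul (sSup A) b = ⨆ a ∈ A, mul a b)
    (hsSup_right : ∀ (A : Set Q) (b : Q), mul b (sSup A) = ⨆ a ∈ A, mul b a)
    (α γ β : Q)
    (hdistinct : ([⊥, α, γ, β, ⊤] : List Q).Pairwise (· ≠ ·))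
    (hcover : ∀ q : Q, q = ⊥ ∨ q = α ∨ q = γ ∨ q = β ∨ q = ⊤)
    (h1 : (⊥ : Q) < α) (h2 : α < γ) (h3 : γ < ⊤) (h4 : (⊥ : Q) < β) (h5 : β < ⊤)
    (hβα : ¬ β ≤ α ∧ ¬ α ≤ β) (hβγ : ¬ β ≤ γ ∧ ¬ γ ≤ β)
    (hprop : ∀ a : Q, mul γ a ⊔ mul a γ ≤ a) :
    ((∃ u : Q, ∀ a : Q, mul u a = a ∧ mul a u = a) ↔ mul γ γ = γ) ∧
    (mul γ γ = γ → ∀ a : Q, mul γ a = a ∧ mul a γ = a) := by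
  have mul_bot : ∀ a : Q, mul a ⊥ = ⊥ := by
    intro a; have := hsSup_right ∅ a; simpa using this
  have bot_mul : ∀ a : Q, mul ⊥ a = ⊥ := by
    intro a; have := hsSup_left ∅ a; simpa using this
  have mul_sup : ∀ a x y : Q, mul a (x ⊔ y) = mul a x ⊔ mul a y := by
    intro a x y
    have := hsSup_right {x, y} a
    rw [sSup_pair] at this
    rw [this, iSup_pair]
  have sup_mul : ∀ a x y : Q, mul (x ⊔ y) a = mul x a ⊔ mul y a := by
    intro a x y
    have := hsSup_left {x, y} a
    rw [sSup_pair] at this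
    rw [this, iSup_pair]
  have hγβtop : γ ⊔ β = ⊤ := by
    rcases hcover (γ ⊔ β) with h | h | h | h | h
    · exact absurd (le_sup_right.trans h.le) h4.not_ge
    · exact absurd (le_sup_left.trans h.le) h2.not_ge
    · exact absurd (le_sup_right.trans h.le) hβγ.1
    · exact absurd (le_sup_left.trans h.le) hβγ.2
    · exact h
  have hαβtop : α ⊔ β = ⊤ := by
    rcases hcover (α ⊔ β) with h | h | h | h | h
    · exact absurd (le_sup_right.trans h.le) h4.not_ge
    · exact absurd (le_sup_right.trans h.le) hβα.1
    · exact absurd (le_sup_right.trans h.le) hβγ.1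
    · exact absurd (le_sup_left.trans h.le) hβα.2
    · exact h
  have le_α : ∀ x : Q, x ≤ α → x = ⊥ ∨ x = α := by
    intro x hx
    rcases hcover x with h | h | h | h | h
    · exact Or.inl h
    · exact Or.inr h
    · subst h; exact absurd hx h2.not_ge
    · subst h; exact absurd hx hβα.1
    · subst h; exact absurd (le_top.trans hx) h2.not_ge
  have le_β : ∀ x : Q, x ≤ β → x = ⊥ ∨ x = β := by
    intro x hx
    rcases hcover x with h | h | h | h | h
    · exact Or.inl h
    · subst h; exact absurd hx hβα.2
    · subst h; exact absurd hx hβγ.2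
    · exact Or.inr h
    · subst h; exact absurd hx h5.not_ge
  have key : mul γ γ = γ → ∀ a : Q, mul γ a = a ∧ mul a γ = a := by
    intro hγγ
    have hγβ' : mul γ β = β := by
      have hle : mul γ β ≤ β := le_sup_left.trans (hprop β)
      rcases le_β _ hle with h | h
      · exfalso
        have e : mul γ α ⊔ mul γ β = mul γ γ ⊔ mul γ β := by
          rw [← mul_sup, ← mul_sup, hαβtop, hγβtop]
        rw [hγγ, h, sup_bot_eq, sup_bot_eq] at e
        have hle' : mul γ α ≤ α := le_sup_left.trans (hprop α)
        rw [e] at hle'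
        exact h2.not_ge hle'
      · exact h
    have hβγ' : mul β γ = β := by
      have hle : mul β γ ≤ β := le_sup_right.trans (hprop β)
      rcases le_β _ hle with h | h
      · exfalso
        have e : mul α γ ⊔ mul β γ = mul γ γ ⊔ mul β γ := by
          rw [← sup_mul, ← sup_mul, hαβtop, hγβtop]
        rw [hγγ, h, sup_bot_eq, sup_bot_eq] at e
        have hle' : mul α γ ≤ α := le_sup_right.trans (hprop α)
        rw [e] at hle'
        exact h2.not_ge hle'
      · exact h
    have hγα : mul γ α = α := by
      have hle : mul γ α ≤ α := le_sup_left.trans (hprop α)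
      rcases le_α _ hle with h | h
      · exfalso
        have e : mul γ α ⊔ mul γ β = mul γ γ ⊔ mul γ β := by
          rw [← mul_sup, ← mul_sup, hαβtop, hγβtop]
        rw [hγγ, h, hγβ', bot_sup_eq, hγβtop] at e
        exact h5.ne e
      · exact h
    have hαγ : mul α γ = α := by
      have hle : mul α γ ≤ α := le_sup_right.trans (hprop α)
      rcases le_α _ hle with h | h
      · exfalso
        have e : mul α γ ⊔ mul β γ = mul γ γ ⊔ mul β γ := by
          rw [← sup_mul, ← sup_mul, hαβtop, hγβtop]
        rw [hγγ, h, hβγ', bot_sup_eq, hγβtop] at e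
        exact h5.ne e
      · exact h
    have hγtop : mul γ ⊤ = ⊤ := by
      rw [← hγβtop, mul_sup, hγγ, hγβ', hγβtop]
    have htopγ : mul ⊤ γ = ⊤ := by
      rw [← hγβtop, sup_mul, hγγ, hβγ', hγβtop]
    intro a
    rcases hcover a with h | h | h | h | h <;> subst h
    · exact ⟨mul_bot γ, bot_mul γ⟩
    · exact ⟨hγα, hαγ⟩
    · exact ⟨hγγ, hγγ⟩
    · exact ⟨hγβ', hβγ'⟩
    · exact ⟨hγtop, htopγ⟩
  refine ⟨⟨?_, fun hγγ => ⟨γ, key hγγ⟩⟩, key⟩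
  rintro ⟨u, hu⟩
  have hγu : γ ≤ u := by
    have h := hprop u
    rw [(hu γ).2] at h
    exact le_sup_left.trans h
  rcases hcover u with h | h | h | h | h
  · subst h; exact absurd hγu (h1.trans h2).not_ge
  · exact absurd (hγu.trans h.le) h2.not_ge
  · rw [← h]; exact (hu u).1
  · exact absurd (hγu.trans h.le) hβγ.2
  · subst h
    have h1' : mul γ ⊤ = γ := (hu γ).2
    rw [← hγβtop, mul_sup] at h1'
    have hb : mul γ β ≤ β := le_sup_left.trans (hprop β)
    rcases le_β _ hb with hb' | hb'
    · rw [hb', sup_bot_eq] at h1'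
      exact h1'
    · exfalso
      rw [hb'] at h1'
      exact hβγ.1 (le_sup_right.trans h1'.le)
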